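/- Let a, b ∈ ℚ with D := -4a³ - 27b² ≠ 0 and let θ₁, θ₂, θ₃ ∈ ℂ be the (necessarily distinct) roots of x³ + ax + b. Then for all t, a₀, a₁, a₂ ∈ ℚ, the three equations f₅ = 0, g₅ = 0, h₅ = 0 hold simultaneously if and only if for every j ∈ {1,2,3} one has (a₀ + a₁θⱼ + a₂θⱼ²)² = D·(t² - (2/3)θⱼ·t - (2θⱼ² + a)/9). -/
import Mathlib


/-- Theorem 1.2 of the paper: the defining equations of `X⁵_E(8)` hold iff the
coefficient-comparison identity (with scaling factor `D`) holds at each root of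
`x³ + ax + b`. -/
theorem stmt_1 (a b D : ℚ) (hD : D = -4 * a ^ 3 - 27 * b ^ 2) (hD0 : D ≠ 0)
    (θ₁ θ₂ θ₃ : ℂ)
    (hroots : ∀ x : ℂ, x ^ 3 + (a : ℂ) * x + (b : ℂ) = (x - θ₁) * (x - θ₂) * (x - θ₃))
    (t a₀ a₁ a₂ : ℚ) :
    (-a * a₂ ^ 2 + 2 * a₀ * a₂ + a₁ ^ 2 + 2 * D / 9 = 0 ∧
      -2 * a * a₁ * a₂ - b * a₂ ^ 2 + 2 * a₀ * a₁ + 2 * D / 3 * t = 0 ∧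
      -2 * b * a₁ * a₂ + a₀ ^ 2 + D * (-t ^ 2 + a / 9) = 0) ↔
    ∀ θ ∈ ({θ₁, θ₂, θ₃} : Set ℂ),
      ((a₀ : ℂ) + (a₁ : ℂ) * θ + (a₂ : ℂ) * θ ^ 2) ^ 2 =
        (D : ℂ) * ((t : ℂ) ^ 2 - 2 / 3 * θ * (t : ℂ) - (2 * θ ^ 2 + (a : ℂ)) / 9) := by
  have hs1 : θ₁ + θ₂ + θ₃ = 0 := by
    linear_combination (hroots 1 + hroots (-1)) / 2 - hroots 0
  have hs2 : θ₁ * θ₂ + θ₁ * θ₃ + θ₂ * θ₃ = (a : ℂ) := by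
    linear_combination (hroots (-1) - hroots 1) / 2
  have hs3 : θ₁ * θ₂ * θ₃ = -(b : ℂ) := by
    linear_combination hroots 0
  have hDc : (D : ℂ) = -4 * (a : ℂ) ^ 3 - 27 * (b : ℂ) ^ 2 := by
    exact_mod_cast congrArg (Rat.cast (K := ℂ)) hD
  have hsq : ((θ₁ - θ₂) * (θ₁ - θ₃) * (θ₂ - θ₃)) ^ 2 = (D : ℂ) := by
    linear_combination
      ((θ₁+θ₂+θ₃)*(θ₁*θ₂+θ₁*θ₃+θ₂*θ₃)^2 - 4*(θ₁+θ₂+θ₃)^2*(θ₁*θ₂*θ₃)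
        + 18*(θ₁*θ₂+θ₁*θ₃+θ₂*θ₃)*(θ₁*θ₂*θ₃)) * hs1
      + (-4) * ((θ₁*θ₂+θ₁*θ₃+θ₂*θ₃)^2 + (a:ℂ)*(θ₁*θ₂+θ₁*θ₃+θ₂*θ₃) + (a:ℂ)^2) * hs2
      + (-27) * (θ₁*θ₂*θ₃ - (b:ℂ)) * hs3 - hDc
  have hVne : (θ₁ - θ₂) * (θ₁ - θ₃) * (θ₂ - θ₃) ≠ 0 := by
    intro h
    apply hD0
    have : (D : ℂ) = 0 := by rw [← hsq, h]; ring
    exact_mod_cast this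
  have hc1 : θ₁ ^ 3 + (a : ℂ) * θ₁ + (b : ℂ) = 0 := by linear_combination hroots θ₁
  have hc2 : θ₂ ^ 3 + (a : ℂ) * θ₂ + (b : ℂ) = 0 := by linear_combination hroots θ₂
  have hc3 : θ₃ ^ 3 + (a : ℂ) * θ₃ + (b : ℂ) = 0 := by linear_combination hroots θ₃
  constructor
  · rintro ⟨e1, e2, e3⟩ θ hθ
    have e1c : -(a:ℂ) * (a₂:ℂ) ^ 2 + 2*(a₀:ℂ)*(a₂:ℂ) + (a₁:ℂ)^2 + 2*(D:ℂ)/9 = 0 := by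
      exact_mod_cast congrArg (Rat.cast (K := ℂ)) e1
    have e2c : -2*(a:ℂ)*(a₁:ℂ)*(a₂:ℂ) - (b:ℂ)*(a₂:ℂ)^2 + 2*(a₀:ℂ)*(a₁:ℂ) + 2*(D:ℂ)/3*(t:ℂ) = 0 := by
      exact_mod_cast congrArg (Rat.cast (K := ℂ)) e2
    have e3c : -2*(b:ℂ)*(a₁:ℂ)*(a₂:ℂ) + (a₀:ℂ)^2 + (D:ℂ)*(-(t:ℂ)^2 + (a:ℂ)/9) = 0 := by
      exact_mod_cast congrArg (Rat.cast (K := ℂ)) e3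
    have hcub : θ ^ 3 + (a : ℂ) * θ + (b : ℂ) = 0 := by
      rcases hθ with h | h | h <;> subst h <;> assumption
    linear_combination θ^2 * e1c + θ * e2c + e3c
      + ((a₂:ℂ)^2 * θ + 2*(a₁:ℂ)*(a₂:ℂ)) * hcub
  · intro h
    set F : ℂ := -(a:ℂ) * (a₂:ℂ) ^ 2 + 2*(a₀:ℂ)*(a₂:ℂ) + (a₁:ℂ)^2 + 2*(D:ℂ)/9 with hF
    set G : ℂ := -2*(a:ℂ)*(a₁:ℂ)*(a₂:ℂ) - (b:ℂ)*(a₂:ℂ)^2 + 2*(a₀:ℂ)*(a₁:ℂ) + 2*(D:ℂ)/3*(t:ℂ) with hG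
    set H : ℂ := -2*(b:ℂ)*(a₁:ℂ)*(a₂:ℂ) + (a₀:ℂ)^2 + (D:ℂ)*(-(t:ℂ)^2 + (a:ℂ)/9) with hH
    have q1 : H + G * θ₁ + F * θ₁ ^ 2 = 0 := by
      have := h θ₁ (by simp)
      linear_combination this - ((a₂:ℂ)^2 * θ₁ + 2*(a₁:ℂ)*(a₂:ℂ)) * hc1
    have q2 : H + G * θ₂ + F * θ₂ ^ 2 = 0 := by
      have := h θ₂ (by simp)
      linear_combination this - ((a₂:ℂ)^2 * θ₂ + 2*(a₁:ℂ)*(a₂:ℂ)) * hc2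
    have q3 : H + G * θ₃ + F * θ₃ ^ 2 = 0 := by
      have := h θ₃ (by simp)
      linear_combination this - ((a₂:ℂ)^2 * θ₃ + 2*(a₁:ℂ)*(a₂:ℂ)) * hc3
    have hFz : F = 0 := by
      have hFV : F * ((θ₁ - θ₂) * (θ₁ - θ₃) * (θ₂ - θ₃)) = 0 := by
        linear_combination (θ₂ - θ₃) * q1 - (θ₁ - θ₃) * q2 + (θ₁ - θ₂) * q3
      rcases mul_eq_zero.mp hFV with h' | h'
      · exact h'
      · exact absurd h' hVne
    have h12 : θ₁ - θ₂ ≠ 0 := fun h' => hVne (by rw [h']; ring)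
    have hGz : G = 0 := by
      have : G * (θ₁ - θ₂) = 0 := by
        linear_combination q1 - q2 - (θ₁ + θ₂) * (θ₁ - θ₂) * hFz
      rcases mul_eq_zero.mp this with h' | h'
      · exact h'
      · exact absurd h' h12
    have hHz : H = 0 := by linear_combination q1 - θ₁ * hGz - θ₁^2 * hFz
    rw [hF] at hFz; rw [hG] at hGz; rw [hH] at hHz
    refine ⟨?_, ?_, ?_⟩
    · exact_mod_cast hFz
    · exact_mod_cast hGz
    · exact_mod_cast hHz
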